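/- arXiv:1508.01756 — 4 statements merged into one kernel-verified Lean document; each statement's English description precedes it below -/
import Mathlib

section
/- Let F : ℝ → ℝ be globally Lipschitz, let a, b > 0, and let f : [0,a] → ℝ and g : [0,b] → ℝ be continuous with f(0) = g(0) = c. Then there exists a continuous function Y : [0,a] × [0,b] → ℝ satisfying the integral equation Y(x,t) = f(x) + g(t) - c + ∫₀ˣ ∫₀ᵗ F(Y(u,v)) dv du for all (x,t) ∈ [0,a] × [0,b]. -/
set_option maxHeartbeats 1000000

open MeasureTheory intervalIntegral BoundedContinuousFunction Function

/-- Existence for the Goursat integral equation on a rectangle: for globally Lipschitz `F`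
and continuous data `f`, `g` with `f(0) = g(0) = c`, there is a continuous solution of
`Y(x,t) = f(x) + g(t) - c + ∫₀ˣ∫₀ᵗ F(Y(u,v)) dv du` on `[0,a] × [0,b]`. -/
theorem goursat_integral_existence (F : ℝ → ℝ) (hF : ∃ K : NNReal, LipschitzWith K F)
    (a b : ℝ) (ha : 0 < a) (hb : 0 < b) (f g : ℝ → ℝ) (c : ℝ)
    (hf : ContinuousOn f (Set.Icc 0 a)) (hg : ContinuousOn g (Set.Icc 0 b))
    (hf0 : f 0 = c) (hg0 : g 0 = c) :
    ∃ Y : ℝ → ℝ → ℝ,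
      ContinuousOn (fun p : ℝ × ℝ => Y p.1 p.2) (Set.Icc 0 a ×ˢ Set.Icc 0 b) ∧
      ∀ x ∈ Set.Icc (0 : ℝ) a, ∀ t ∈ Set.Icc (0 : ℝ) b,
        Y x t = f x + g t - c
          + ∫ u in (0 : ℝ)..x, ∫ v in (0 : ℝ)..t, F (Y u v) := by
  obtain ⟨K, hK⟩ := hF
  -- clamp functions
  set q : ℝ → ℝ := fun x => max 0 (min x a) with hq_def
  set r : ℝ → ℝ := fun t => max 0 (min t b) with hr_def
  have hq_mem : ∀ x, q x ∈ Set.Icc (0 : ℝ) a :=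
    fun x => ⟨le_max_left _ _, max_le ha.le (min_le_right x a)⟩
  have hr_mem : ∀ t, r t ∈ Set.Icc (0 : ℝ) b :=
    fun t => ⟨le_max_left _ _, max_le hb.le (min_le_right t b)⟩
  have hq_id : ∀ x ∈ Set.Icc (0 : ℝ) a, q x = x := by
    intro x hx; simp only [hq_def]; rw [min_eq_left hx.2, max_eq_right hx.1]
  have hr_id : ∀ t ∈ Set.Icc (0 : ℝ) b, r t = t := by
    intro t ht; simp only [hr_def]; rw [min_eq_left ht.2, max_eq_right ht.1]
  have hq_cont : Continuous q := continuous_const.max (continuous_id.min continuous_const)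
  have hr_cont : Continuous r := continuous_const.max (continuous_id.min continuous_const)
  have hcl_cont : Continuous fun p : ℝ × ℝ => ((q p.1, r p.2) : ℝ × ℝ) :=
    (hq_cont.comp continuous_fst).prodMk (hr_cont.comp continuous_snd)
  let cl : C(ℝ × ℝ, ℝ × ℝ) := ⟨fun p => (q p.1, r p.2), hcl_cont⟩
  -- the integrand operator
  let Z : (ℝ × ℝ →ᵇ ℝ) → (ℝ × ℝ →ᵇ ℝ) :=
    fun Y => BoundedContinuousFunction.comp F hK (Y.compContinuous cl)
  -- joint continuity of the double primitive
  have hZc : ∀ (Y : ℝ × ℝ →ᵇ ℝ), Continuous fun p : ℝ × ℝ => F (Y (q p.1, r p.2)) :=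
    fun Y => hK.continuous.comp (Y.continuous.comp hcl_cont)
  have innerCont : ∀ (Y : ℝ × ℝ →ᵇ ℝ),
      Continuous fun p : ℝ × ℝ => ∫ v in (0:ℝ)..r p.2, F (Y (q p.1, r v)) := by
    intro Y
    apply intervalIntegral.continuous_parametric_intervalIntegral_of_continuous
      (f := fun (p : ℝ × ℝ) (v : ℝ) => F (Y (q p.1, r v))) (s := fun p => r p.2)
    · exact (hZc Y).comp ((continuous_fst.comp continuous_fst).prodMk continuous_snd)
    · exact hr_cont.comp continuous_snd
  have outerCont : ∀ (Y : ℝ × ℝ →ᵇ ℝ),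
      Continuous fun p : ℝ × ℝ =>
        ∫ u in (0:ℝ)..q p.1, ∫ v in (0:ℝ)..r p.2, F (Y (q u, r v)) := by
    intro Y
    apply intervalIntegral.continuous_parametric_intervalIntegral_of_continuous
      (f := fun (p : ℝ × ℝ) (u : ℝ) => ∫ v in (0:ℝ)..r p.2, F (Y (q u, r v)))
      (s := fun p => q p.1)
    · exact (innerCont Y).comp ((continuous_snd).prodMk (continuous_snd.comp continuous_fst))
    · exact hq_cont.comp continuous_fst
  -- the integral part, as a bounded continuous function
  have hWbound : ∀ (Y : ℝ × ℝ →ᵇ ℝ) (p : ℝ × ℝ),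
      ‖∫ u in (0:ℝ)..q p.1, ∫ v in (0:ℝ)..r p.2, F (Y (q u, r v))‖ ≤ ‖Z Y‖ * b * a := by
    intro Y p
    have h1 : ∀ u ∈ Set.uIoc (0:ℝ) (q p.1),
        ‖∫ v in (0:ℝ)..r p.2, F (Y (q u, r v))‖ ≤ ‖Z Y‖ * b := by
      intro u _
      have h2 : ∀ v ∈ Set.uIoc (0:ℝ) (r p.2), ‖F (Y (q u, r v))‖ ≤ ‖Z Y‖ := by
        intro v _
        exact (Z Y).norm_coe_le_norm (u, v)
      calc ‖∫ v in (0:ℝ)..r p.2, F (Y (q u, r v))‖ ≤ ‖Z Y‖ * |r p.2 - 0| :=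
            intervalIntegral.norm_integral_le_of_norm_le_const h2
        _ ≤ ‖Z Y‖ * b := by
            rw [sub_zero, abs_of_nonneg (hr_mem p.2).1]
            exact mul_le_mul_of_nonneg_left (hr_mem p.2).2 (norm_nonneg _)
    calc ‖∫ u in (0:ℝ)..q p.1, ∫ v in (0:ℝ)..r p.2, F (Y (q u, r v))‖
        ≤ (‖Z Y‖ * b) * |q p.1 - 0| := intervalIntegral.norm_integral_le_of_norm_le_const h1
      _ ≤ ‖Z Y‖ * b * a := by
          rw [sub_zero, abs_of_nonneg (hq_mem p.1).1]
          exact mul_le_mul_of_nonneg_left (hq_mem p.1).2 (by positivity)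
  let W : (ℝ × ℝ →ᵇ ℝ) → (ℝ × ℝ →ᵇ ℝ) := fun Y =>
    BoundedContinuousFunction.ofNormedAddCommGroup
      (fun p : ℝ × ℝ => ∫ u in (0:ℝ)..q p.1, ∫ v in (0:ℝ)..r p.2, F (Y (q u, r v)))
      (outerCont Y) (‖Z Y‖ * b * a) (hWbound Y)
  -- the boundary part
  obtain ⟨Cf, hCf⟩ := isCompact_Icc.exists_bound_of_continuousOn hf
  obtain ⟨Cg, hCg⟩ := isCompact_Icc.exists_bound_of_continuousOn hg
  have hBcont : Continuous fun p : ℝ × ℝ => f (q p.1) + g (r p.2) - c := by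
    apply Continuous.sub _ continuous_const
    exact (hf.comp_continuous (hq_cont.comp continuous_fst) fun p => hq_mem p.1).add
      (hg.comp_continuous (hr_cont.comp continuous_snd) fun p => hr_mem p.2)
  have hBbound : ∀ p : ℝ × ℝ, ‖f (q p.1) + g (r p.2) - c‖ ≤ Cf + Cg + ‖c‖ := by
    intro p
    calc ‖f (q p.1) + g (r p.2) - c‖ ≤ ‖f (q p.1) + g (r p.2)‖ + ‖c‖ := norm_sub_le _ _
      _ ≤ ‖f (q p.1)‖ + ‖g (r p.2)‖ + ‖c‖ := by gcongr; exact norm_add_le _ _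
      _ ≤ Cf + Cg + ‖c‖ := by
          gcongr
          · exact hCf _ (hq_mem p.1)
          · exact hCg _ (hr_mem p.2)
  let B : ℝ × ℝ →ᵇ ℝ := BoundedContinuousFunction.ofNormedAddCommGroup
    (fun p : ℝ × ℝ => f (q p.1) + g (r p.2) - c) hBcont (Cf + Cg + ‖c‖) hBbound
  -- the Picard operator
  let T : (ℝ × ℝ →ᵇ ℝ) → (ℝ × ℝ →ᵇ ℝ) := fun Y => B + W Y
  have hTapp : ∀ (Y : ℝ × ℝ →ᵇ ℝ) (p : ℝ × ℝ),
      T Y p = f (q p.1) + g (r p.2) - c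
        + ∫ u in (0:ℝ)..q p.1, ∫ v in (0:ℝ)..r p.2, F (Y (q u, r v)) := fun Y p => rfl
  -- the key iterated estimate
  have key : ∀ (n : ℕ) (Y₁ Y₂ : ℝ × ℝ →ᵇ ℝ) (p : ℝ × ℝ),
      |(T^[n] Y₁) p - (T^[n] Y₂) p|
        ≤ ((K : ℝ) * a) ^ n * (r p.2) ^ n / n.factorial * dist Y₁ Y₂ := by
    intro n
    induction n with
    | zero =>
      intro Y₁ Y₂ p
      simpa [Real.dist_eq] using dist_coe_le_dist (f := Y₁) (g := Y₂) p
    | succ n ih =>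
      intro Y₁ Y₂ p
      rw [Function.iterate_succ_apply', Function.iterate_succ_apply']
      set Z₁ := T^[n] Y₁ with hZ₁
      set Z₂ := T^[n] Y₂ with hZ₂
      set D := dist Y₁ Y₂ with hD
      have hD0 : 0 ≤ D := dist_nonneg
      set t' := r p.2 with ht'
      have ht'0 : 0 ≤ t' := (hr_mem p.2).1
      have ht'b : t' ≤ b := (hr_mem p.2).2
      -- inner integrals are continuous in u
      have hIcont : ∀ (Y : ℝ × ℝ →ᵇ ℝ),
          Continuous fun u : ℝ => ∫ v in (0:ℝ)..t', F (Y (q u, r v)) := by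
        intro Y
        have h := (innerCont Y).comp
          ((continuous_id (X := ℝ)).prodMk (continuous_const (y := p.2)))
        exact h
      have hsub : (∫ u in (0:ℝ)..q p.1, ∫ v in (0:ℝ)..t', F (Z₁ (q u, r v)))
          - (∫ u in (0:ℝ)..q p.1, ∫ v in (0:ℝ)..t', F (Z₂ (q u, r v)))
          = ∫ u in (0:ℝ)..q p.1,
              ((∫ v in (0:ℝ)..t', F (Z₁ (q u, r v)))
                - ∫ v in (0:ℝ)..t', F (Z₂ (q u, r v))) :=
        (intervalIntegral.integral_sub ((hIcont Z₁).intervalIntegrable _ _)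
          ((hIcont Z₂).intervalIntegrable _ _)).symm
      have hvcont : ∀ (Y : ℝ × ℝ →ᵇ ℝ) (u : ℝ), Continuous fun v : ℝ => F (Y (q u, r v)) := by
        intro Y u
        exact (hZc Y).comp (continuous_const.prodMk continuous_id)
      -- bound for the inner difference
      have hinner : ∀ u : ℝ,
          ‖(∫ v in (0:ℝ)..t', F (Z₁ (q u, r v))) - ∫ v in (0:ℝ)..t', F (Z₂ (q u, r v))‖
            ≤ (K : ℝ) * ((K : ℝ) * a) ^ n / n.factorial * D * (t' ^ (n + 1) / (n + 1)) := by
        intro u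
        rw [← intervalIntegral.integral_sub ((hvcont Z₁ u).intervalIntegrable _ _)
          ((hvcont Z₂ u).intervalIntegrable _ _)]
        have h1 : ‖∫ v in (0:ℝ)..t', (F (Z₁ (q u, r v)) - F (Z₂ (q u, r v)))‖
            ≤ ∫ v in (0:ℝ)..t', ‖F (Z₁ (q u, r v)) - F (Z₂ (q u, r v))‖ :=
          intervalIntegral.norm_integral_le_integral_norm ht'0
        refine h1.trans ?_
        have h2 : (∫ v in (0:ℝ)..t', ‖F (Z₁ (q u, r v)) - F (Z₂ (q u, r v))‖)
            ≤ ∫ v in (0:ℝ)..t', (K : ℝ) * (((K : ℝ) * a) ^ n / n.factorial * D) * v ^ n := by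
          apply intervalIntegral.integral_mono_on ht'0
          · exact (((hvcont Z₁ u).sub (hvcont Z₂ u)).norm.intervalIntegrable _ _)
          · exact ((continuous_const.mul (continuous_pow n)).intervalIntegrable _ _)
          · intro v hv
            have hlip : ‖F (Z₁ (q u, r v)) - F (Z₂ (q u, r v))‖
                ≤ (K : ℝ) * ‖Z₁ (q u, r v) - Z₂ (q u, r v)‖ := by
              have := hK.dist_le_mul (Z₁ (q u, r v)) (Z₂ (q u, r v))
              simpa [Real.dist_eq] using this
            refine hlip.trans ?_
            have hrr : r (r v) = r v := hr_id _ (hr_mem v)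
            have hrv : r v = v := hr_id v ⟨hv.1, hv.2.trans ht'b⟩
            have hih' : ‖Z₁ (q u, r v) - Z₂ (q u, r v)‖
                ≤ ((K : ℝ) * a) ^ n * v ^ n / n.factorial * D := by
              simpa [Real.norm_eq_abs, hrr, hrv, hD, hZ₁, hZ₂]
                using ih Y₁ Y₂ (q u, r v)
            calc (K : ℝ) * ‖Z₁ (q u, r v) - Z₂ (q u, r v)‖
                ≤ (K : ℝ) * (((K : ℝ) * a) ^ n * v ^ n / n.factorial * D) :=
                  mul_le_mul_of_nonneg_left hih' K.coe_nonneg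
              _ = (K : ℝ) * (((K : ℝ) * a) ^ n / ↑n.factorial * D) * v ^ n := by ring
        refine h2.trans (le_of_eq ?_)
        rw [intervalIntegral.integral_const_mul, integral_pow]
        have : ((0:ℝ)) ^ (n + 1) = 0 := zero_pow (Nat.succ_ne_zero n)
        rw [this, sub_zero]
        ring
      -- combine
      have hdiff : T Z₁ p - T Z₂ p
          = ∫ u in (0:ℝ)..q p.1,
              ((∫ v in (0:ℝ)..t', F (Z₁ (q u, r v)))
                - ∫ v in (0:ℝ)..t', F (Z₂ (q u, r v))) := by
        rw [hTapp, hTapp, ← hsub]; ring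
      rw [hdiff]
      have houter : ‖∫ u in (0:ℝ)..q p.1,
          ((∫ v in (0:ℝ)..t', F (Z₁ (q u, r v)))
            - ∫ v in (0:ℝ)..t', F (Z₂ (q u, r v)))‖
          ≤ ((K : ℝ) * ((K : ℝ) * a) ^ n / n.factorial * D * (t' ^ (n + 1) / (n + 1)))
            * |q p.1 - 0| :=
        intervalIntegral.norm_integral_le_of_norm_le_const (fun u _ => hinner u)
      rw [Real.norm_eq_abs] at houter
      refine le_trans houter ?_
      rw [sub_zero, abs_of_nonneg (hq_mem p.1).1]
      have hqa : q p.1 ≤ a := (hq_mem p.1).2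
      have hKnn : (0:ℝ) ≤ (K : ℝ) := K.coe_nonneg
      have hC0 : (0:ℝ) ≤ (K : ℝ) * ((K : ℝ) * a) ^ n / n.factorial * D
          * (t' ^ (n + 1) / (n + 1)) := by
        have h1 : (0:ℝ) ≤ t' ^ (n + 1) / (n + 1) :=
          div_nonneg (pow_nonneg ht'0 _) (by positivity)
        exact mul_nonneg (mul_nonneg (by positivity) hD0) h1
      calc ((K : ℝ) * ((K : ℝ) * a) ^ n / n.factorial * D * (t' ^ (n + 1) / (n + 1))) * q p.1
          ≤ ((K : ℝ) * ((K : ℝ) * a) ^ n / n.factorial * D * (t' ^ (n + 1) / (n + 1))) * a :=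
            mul_le_mul_of_nonneg_left hqa hC0
        _ = ((K : ℝ) * a) ^ (n + 1) * t' ^ (n + 1) / (n + 1).factorial * D := by
            rw [Nat.factorial_succ]
            push_cast
            field_simp
            ring
  -- uniform contraction estimate for the iterate
  have hdist : ∀ (n : ℕ) (Y₁ Y₂ : ℝ × ℝ →ᵇ ℝ),
      dist (T^[n] Y₁) (T^[n] Y₂) ≤ ((K : ℝ) * a * b) ^ n / n.factorial * dist Y₁ Y₂ := by
    intro n Y₁ Y₂
    have hKnn : (0:ℝ) ≤ (K : ℝ) := K.coe_nonneg
    rw [BoundedContinuousFunction.dist_le (by positivity)]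
    intro p
    rw [Real.dist_eq]
    refine (key n Y₁ Y₂ p).trans ?_
    have h1 : ((K : ℝ) * a) ^ n * (r p.2) ^ n ≤ ((K : ℝ) * a * b) ^ n := by
      rw [mul_pow ((K : ℝ) * a) b n]
      exact mul_le_mul_of_nonneg_left
        (pow_le_pow_left₀ (hr_mem p.2).1 (hr_mem p.2).2 n) (by positivity)
    refine mul_le_mul_of_nonneg_right ?_ dist_nonneg
    exact div_le_div_of_nonneg_right h1 (Nat.cast_nonneg _)
  -- find a contracting iterate
  have htend := FloorSemiring.tendsto_pow_div_factorial_atTop ((K : ℝ) * a * b)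
  obtain ⟨n, hn⟩ := (htend.eventually_lt_const (by norm_num : (0:ℝ) < 1)).exists
  have hKnn : (0:ℝ) ≤ (K : ℝ) := K.coe_nonneg
  have hcn0 : (0:ℝ) ≤ ((K : ℝ) * a * b) ^ n / n.factorial := by positivity
  let cn : NNReal := ⟨((K : ℝ) * a * b) ^ n / n.factorial, hcn0⟩
  have hC : ContractingWith cn (T^[n]) := by
    constructor
    · exact_mod_cast hn
    · exact LipschitzWith.of_dist_le_mul fun Y₁ Y₂ => hdist n Y₁ Y₂
  -- fixed point
  let x₀ := ContractingWith.fixedPoint (T^[n]) hC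
  have hfix : Function.IsFixedPt (T^[n]) x₀ := hC.fixedPoint_isFixedPt
  have hTfix : T x₀ = x₀ := by
    have h1 : Function.IsFixedPt (T^[n]) (T x₀) := by
      show T^[n] (T x₀) = T x₀
      rw [← Function.iterate_succ_apply, Function.iterate_succ_apply', hfix]
    exact hC.fixedPoint_unique' h1 hfix
  -- conclusion
  refine ⟨fun x t => x₀ (x, t), ?_, ?_⟩
  · exact Continuous.continuousOn (by exact x₀.continuous)
  · intro x hx t ht
    show x₀ (x, t) = _
    have heq : x₀ (x, t) = f (q x) + g (r t) - c
        + ∫ u in (0:ℝ)..q x, ∫ v in (0:ℝ)..r t, F (x₀ (q u, r v)) := by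
      conv_lhs => rw [← hTfix]
      exact hTapp x₀ (x, t)
    rw [heq, hq_id x hx, hr_id t ht]
    congr 1
    apply intervalIntegral.integral_congr
    intro u hu
    rw [Set.uIcc_of_le hx.1] at hu
    simp only [hq_id u ⟨hu.1, hu.2.trans hx.2⟩]
    apply intervalIntegral.integral_congr
    intro v hv
    rw [Set.uIcc_of_le ht.1] at hv
    simp only [hr_id v ⟨hv.1, hv.2.trans ht.2⟩]
end

section
/- Let F : ℝ → ℝ be globally Lipschitz, let a, b > 0, and let f : [0,a] → ℝ and g : [0,b] → ℝ be continuous with f(0) = g(0) = c. If Y₁ and Y₂ are continuous functions on [0,a] × [0,b] both satisfying the integral equation Y(x,t) = f(x) + g(t) - c + ∫₀ˣ ∫₀ᵗ F(Y(u,v)) dv du for all (x,t) ∈ [0,a] × [0,b], then Y₁ = Y₂ on [0,a] × [0,b]. -/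
open intervalIntegral MeasureTheory Set Filter

/-- Uniqueness for the Goursat integral equation on a rectangle: for globally Lipschitz `F`
and continuous data `f`, `g` with `f(0) = g(0) = c`, any two continuous solutions of
`Y(x,t) = f(x) + g(t) - c + ∫₀ˣ∫₀ᵗ F(Y(u,v)) dv du` on `[0,a] × [0,b]` coincide there. -/
theorem goursat_integral_uniqueness (F : ℝ → ℝ) (hF : ∃ K : NNReal, LipschitzWith K F)
    (a b : ℝ) (ha : 0 < a) (hb : 0 < b) (f g : ℝ → ℝ) (c : ℝ)
    (hf : ContinuousOn f (Set.Icc 0 a)) (hg : ContinuousOn g (Set.Icc 0 b))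
    (hf0 : f 0 = c) (hg0 : g 0 = c) (Y₁ Y₂ : ℝ → ℝ → ℝ)
    (hY₁ : ContinuousOn (fun p : ℝ × ℝ => Y₁ p.1 p.2) (Set.Icc 0 a ×ˢ Set.Icc 0 b))
    (hY₂ : ContinuousOn (fun p : ℝ × ℝ => Y₂ p.1 p.2) (Set.Icc 0 a ×ˢ Set.Icc 0 b))
    (heq₁ : ∀ x ∈ Set.Icc (0 : ℝ) a, ∀ t ∈ Set.Icc (0 : ℝ) b,
      Y₁ x t = f x + g t - c + ∫ u in (0 : ℝ)..x, ∫ v in (0 : ℝ)..t, F (Y₁ u v))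
    (heq₂ : ∀ x ∈ Set.Icc (0 : ℝ) a, ∀ t ∈ Set.Icc (0 : ℝ) b,
      Y₂ x t = f x + g t - c + ∫ u in (0 : ℝ)..x, ∫ v in (0 : ℝ)..t, F (Y₂ u v)) :
    ∀ x ∈ Set.Icc (0 : ℝ) a, ∀ t ∈ Set.Icc (0 : ℝ) b, Y₁ x t = Y₂ x t := by
  obtain ⟨K, hK⟩ := hF
  -- projections onto [0,a] and [0,b]
  set π₁ : ℝ → ℝ := fun x => max 0 (min x a) with hπ₁
  set π₂ : ℝ → ℝ := fun t => max 0 (min t b) with hπ₂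
  have hπ₁c : Continuous π₁ := by fun_prop
  have hπ₂c : Continuous π₂ := by fun_prop
  have hπ₁m : ∀ x, π₁ x ∈ Set.Icc (0:ℝ) a := fun x =>
    ⟨le_max_left _ _, max_le ha.le (min_le_right _ _)⟩
  have hπ₂m : ∀ t, π₂ t ∈ Set.Icc (0:ℝ) b := fun t =>
    ⟨le_max_left _ _, max_le hb.le (min_le_right _ _)⟩
  have hπ₁e : ∀ x ∈ Set.Icc (0:ℝ) a, π₁ x = x := fun x hx => by
    simp [hπ₁, min_eq_left hx.2, max_eq_right hx.1]
  have hπ₂e : ∀ t ∈ Set.Icc (0:ℝ) b, π₂ t = t := fun t ht => by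
    simp [hπ₂, min_eq_left ht.2, max_eq_right ht.1]
  -- continuous extensions to the whole plane
  set Z₁ : ℝ → ℝ → ℝ := fun x t => Y₁ (π₁ x) (π₂ t) with hZ₁def
  set Z₂ : ℝ → ℝ → ℝ := fun x t => Y₂ (π₁ x) (π₂ t) with hZ₂def
  have hproj : Continuous (fun p : ℝ × ℝ => ((π₁ p.1, π₂ p.2) : ℝ × ℝ)) := by fun_prop
  have hZ₁c : Continuous (fun p : ℝ × ℝ => Z₁ p.1 p.2) :=
    hY₁.comp_continuous hproj (fun p => ⟨hπ₁m p.1, hπ₂m p.2⟩)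
  have hZ₂c : Continuous (fun p : ℝ × ℝ => Z₂ p.1 p.2) :=
    hY₂.comp_continuous hproj (fun p => ⟨hπ₁m p.1, hπ₂m p.2⟩)
  have hZ₁e : ∀ x ∈ Set.Icc (0:ℝ) a, ∀ t ∈ Set.Icc (0:ℝ) b, Z₁ x t = Y₁ x t := by
    intro x hx t ht; simp [hZ₁def, hπ₁e x hx, hπ₂e t ht]
  have hZ₂e : ∀ x ∈ Set.Icc (0:ℝ) a, ∀ t ∈ Set.Icc (0:ℝ) b, Z₂ x t = Y₂ x t := by
    intro x hx t ht; simp [hZ₂def, hπ₁e x hx, hπ₂e t ht]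
  -- the difference and the Lipschitz difference
  set D : ℝ → ℝ → ℝ := fun x t => Z₁ x t - Z₂ x t with hDdef
  set H : ℝ → ℝ → ℝ := fun x t => F (Z₁ x t) - F (Z₂ x t) with hHdef
  have hDc : Continuous (fun p : ℝ × ℝ => D p.1 p.2) := hZ₁c.sub hZ₂c
  have hHc : Continuous (fun p : ℝ × ℝ => H p.1 p.2) :=
    (hK.continuous.comp hZ₁c).sub (hK.continuous.comp hZ₂c)
  have hHle : ∀ x t, |H x t| ≤ K * |D x t| := by
    intro x t
    have := hK.dist_le_mul (Z₁ x t) (Z₂ x t)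
    simpa [hHdef, hDdef, Real.dist_eq] using this
  -- key identity
  have key : ∀ x ∈ Set.Icc (0:ℝ) a, ∀ t ∈ Set.Icc (0:ℝ) b,
      D x t = ∫ u in (0:ℝ)..x, ∫ v in (0:ℝ)..t, H u v := by
    intro x hx t ht
    have hsub₁ : Set.uIcc (0:ℝ) x ⊆ Set.Icc 0 a := by
      rw [Set.uIcc_of_le hx.1]; exact Set.Icc_subset_Icc le_rfl hx.2
    have hsub₂ : Set.uIcc (0:ℝ) t ⊆ Set.Icc 0 b := by
      rw [Set.uIcc_of_le ht.1]; exact Set.Icc_subset_Icc le_rfl ht.2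
    have e₁ : (∫ u in (0:ℝ)..x, ∫ v in (0:ℝ)..t, F (Y₁ u v))
        = ∫ u in (0:ℝ)..x, ∫ v in (0:ℝ)..t, F (Z₁ u v) := by
      refine intervalIntegral.integral_congr (fun u hu => ?_)
      refine intervalIntegral.integral_congr (fun v hv => ?_)
      rw [hZ₁e u (hsub₁ hu) v (hsub₂ hv)]
    have e₂ : (∫ u in (0:ℝ)..x, ∫ v in (0:ℝ)..t, F (Y₂ u v))
        = ∫ u in (0:ℝ)..x, ∫ v in (0:ℝ)..t, F (Z₂ u v) := by
      refine intervalIntegral.integral_congr (fun u hu => ?_)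
      refine intervalIntegral.integral_congr (fun v hv => ?_)
      rw [hZ₂e u (hsub₁ hu) v (hsub₂ hv)]
    have hG₁ : Continuous (fun u : ℝ => ∫ v in (0:ℝ)..t, F (Z₁ u v)) := by
      apply intervalIntegral.continuous_parametric_intervalIntegral_of_continuous'
      exact hK.continuous.comp hZ₁c
    have hG₂ : Continuous (fun u : ℝ => ∫ v in (0:ℝ)..t, F (Z₂ u v)) := by
      apply intervalIntegral.continuous_parametric_intervalIntegral_of_continuous'
      exact hK.continuous.comp hZ₂c
    have hD : D x t = (∫ u in (0:ℝ)..x, ∫ v in (0:ℝ)..t, F (Z₁ u v))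
        - ∫ u in (0:ℝ)..x, ∫ v in (0:ℝ)..t, F (Z₂ u v) := by
      simp only [hDdef]
      rw [hZ₁e x hx t ht, hZ₂e x hx t ht, heq₁ x hx t ht, heq₂ x hx t ht, e₁, e₂]; ring
    rw [hD, ← intervalIntegral.integral_sub (hG₁.intervalIntegrable _ _)
      (hG₂.intervalIntegrable _ _)]
    refine intervalIntegral.integral_congr (fun u _ => ?_)
    have hi₁ : IntervalIntegrable (fun v => F (Z₁ u v)) MeasureTheory.volume 0 t :=
      (hK.continuous.comp (hZ₁c.comp (Continuous.prodMk_right u))).intervalIntegrable 0 t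
    have hi₂ : IntervalIntegrable (fun v => F (Z₂ u v)) MeasureTheory.volume 0 t :=
      (hK.continuous.comp (hZ₂c.comp (Continuous.prodMk_right u))).intervalIntegrable 0 t
    rw [← intervalIntegral.integral_sub hi₁ hi₂]
  -- uniform bound on the rectangle
  obtain ⟨M, hM⟩ := (isCompact_Icc.prod isCompact_Icc).exists_bound_of_continuousOn hDc.continuousOn
  have hM0 : 0 ≤ M := le_trans (norm_nonneg _) (hM (0, 0) ⟨⟨le_rfl, ha.le⟩, ⟨le_rfl, hb.le⟩⟩)
  -- main induction
  have main : ∀ n : ℕ, ∀ x ∈ Set.Icc (0:ℝ) a, ∀ t ∈ Set.Icc (0:ℝ) b,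
      |D x t| ≤ M * (K * b) ^ n * x ^ n / n.factorial := by
    intro n
    induction n with
    | zero =>
      intro x hx t ht
      simpa using hM (x, t) ⟨hx, ht⟩
    | succ n ih =>
      intro x hx t ht
      set C : ℝ := M * (K * b) ^ n / n.factorial with hC
      have hC0 : 0 ≤ C := by positivity
      -- bound the inner integral
      have hGbound : ∀ u ∈ Set.uIoc (0:ℝ) x, |∫ v in (0:ℝ)..t, H u v| ≤ b * (K * (C * u ^ n)) := by
        intro u hu
        have hu' : u ∈ Set.Icc (0:ℝ) a := by
          rcases Set.mem_uIoc.mp hu with h | h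
          · exact ⟨h.1.le, h.2.trans hx.2⟩
          · exfalso; linarith [h.1, h.2, hx.1]
        have hu0 : 0 ≤ u := hu'.1
        have hinner : ∀ v ∈ Set.uIoc (0:ℝ) t, ‖H u v‖ ≤ K * (C * u ^ n) := by
          intro v hv
          have hv' : v ∈ Set.Icc (0:ℝ) b := by
            rcases Set.mem_uIoc.mp hv with h | h
            · exact ⟨h.1.le, h.2.trans ht.2⟩
            · exfalso; linarith [h.1, h.2, ht.1]
          have h1 : |D u v| ≤ C * u ^ n := by
            have := ih u hu' v hv'
            calc |D u v| ≤ M * (K * b) ^ n * u ^ n / n.factorial := this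
              _ = C * u ^ n := by rw [hC]; ring
          calc ‖H u v‖ = |H u v| := rfl
            _ ≤ K * |D u v| := hHle u v
            _ ≤ K * (C * u ^ n) := by
                exact mul_le_mul_of_nonneg_left h1 K.2
        calc |∫ v in (0:ℝ)..t, H u v| ≤ K * (C * u ^ n) * |t - 0| :=
              intervalIntegral.norm_integral_le_of_norm_le_const hinner
          _ = |t - 0| * (K * (C * u ^ n)) := by ring
          _ ≤ b * (K * (C * u ^ n)) := by
              apply mul_le_mul_of_nonneg_right _ (by positivity)
              rw [sub_zero, abs_of_nonneg ht.1]; exact ht.2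
      -- bound the outer integral
      have houter : |D x t| ≤ |∫ u in (0:ℝ)..x, b * (K * (C * u ^ n))| := by
        rw [key x hx t ht]
        have hbd : IntervalIntegrable (fun u : ℝ => b * (↑K * (C * u ^ n)))
            MeasureTheory.volume 0 x :=
          ((by fun_prop : Continuous fun u : ℝ => b * (↑K * (C * u ^ n)))).intervalIntegrable _ _
        have hae : ∀ᵐ u ∂(MeasureTheory.volume.restrict (Set.uIoc (0:ℝ) x)),
            ‖∫ v in (0:ℝ)..t, H u v‖ ≤ b * (↑K * (C * u ^ n)) := by
          filter_upwards [MeasureTheory.ae_restrict_mem measurableSet_uIoc] with u hu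
          exact hGbound u hu
        exact intervalIntegral.norm_integral_le_abs_of_norm_le hae hbd
      have hval : (∫ u in (0:ℝ)..x, b * (K * (C * u ^ n)))
          = b * K * C * (x ^ (n+1) / (n+1)) := by
        have : (∫ u in (0:ℝ)..x, b * (K * (C * u ^ n)))
            = (b * (K * C)) * ∫ u in (0:ℝ)..x, u ^ n := by
          rw [← intervalIntegral.integral_const_mul]
          congr 1; ext u; ring
        rw [this, integral_pow]; push_cast; ring
      have hgoal : b * K * C * (x ^ (n+1) / (n+1))
          = M * (K * b) ^ (n+1) * x ^ (n+1) / (n+1).factorial := by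
        rw [hC, Nat.factorial_succ]
        push_cast
        have hnf : (n.factorial : ℝ) ≠ 0 := by positivity
        field_simp
        ring
      calc |D x t| ≤ |∫ u in (0:ℝ)..x, b * (K * (C * u ^ n))| := houter
        _ = |b * K * C * (x ^ (n+1) / (n+1))| := by rw [hval]
        _ = b * K * C * (x ^ (n+1) / (n+1)) := by
            rw [abs_of_nonneg]
            exact mul_nonneg (by positivity)
              (div_nonneg (pow_nonneg hx.1 _) (by positivity))
        _ = M * (K * b) ^ (n+1) * x ^ (n+1) / (n+1).factorial := hgoal
  -- conclude
  intro x hx t ht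
  have hbound : ∀ n : ℕ, |D x t| ≤ M * ((K * b * a) ^ n / n.factorial) := by
    intro n
    refine (main n x hx t ht).trans ?_
    have h1 : (K * b) ^ n * x ^ n ≤ (K * b * a) ^ n := by
      rw [← mul_pow]
      refine pow_le_pow_left₀ (mul_nonneg (by positivity) hx.1) ?_ n
      exact mul_le_mul_of_nonneg_left hx.2 (by positivity)
    calc M * (K * b) ^ n * x ^ n / n.factorial
        = M * ((K * b) ^ n * x ^ n) / n.factorial := by ring
      _ ≤ M * (K * b * a) ^ n / n.factorial := by
          apply div_le_div_of_nonneg_right _ (by positivity)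
          exact mul_le_mul_of_nonneg_left h1 hM0
      _ = M * ((K * b * a) ^ n / n.factorial) := by ring
  have htend : Tendsto (fun n : ℕ => M * ((K * b * a) ^ n / n.factorial)) atTop (nhds 0) := by
    have := FloorSemiring.tendsto_pow_div_factorial_atTop (K * b * a : ℝ)
    simpa using this.const_mul M
  have hle0 : |D x t| ≤ 0 := le_of_tendsto_of_tendsto' tendsto_const_nhds htend hbound
  have : D x t = 0 := abs_nonpos_iff.mp hle0
  have hD' : Y₁ x t - Y₂ x t = 0 := by
    rw [← hZ₁e x hx t ht, ← hZ₂e x hx t ht]; exact this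
  linarith
end

section
/- Let f, g : [0,∞) → ℝ be continuous with f(0) = g(0) = c. Then there exists exactly one continuous function Y : [0,∞) × [0,∞) → ℝ satisfying Y(x,t) = f(x) + g(t) - c + ∫₀ˣ ∫₀ᵗ sin(Y(u,v)) dv du for all x, t ≥ 0. -/
open MeasureTheory intervalIntegral Real Set

noncomputable section SineGordonAux

/-- The quarter plane. -/
abbrev sgQ : Set (ℝ × ℝ) := Set.Ici (0:ℝ) ×ˢ Set.Ici (0:ℝ)

/-- Bounded continuous functions on the quarter plane. -/
abbrev sgX := BoundedContinuousFunction sgQ ℝ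

/-- Clamp a point of the plane into the quarter plane. -/
def sgClamp (p : ℝ × ℝ) : sgQ :=
  ⟨(max p.1 0, max p.2 0), ⟨Set.mem_Ici.mpr (le_max_right _ _), Set.mem_Ici.mpr (le_max_right _ _)⟩⟩

lemma sgClamp_continuous : Continuous sgClamp :=
  Continuous.subtype_mk ((continuous_fst.max continuous_const).prodMk
    (continuous_snd.max continuous_const)) _

lemma sgClamp_of_nonneg {u v : ℝ} (hu : 0 ≤ u) (hv : 0 ≤ v) :
    sgClamp (u, v) = ⟨(u, v), ⟨hu, hv⟩⟩ := by
  apply Subtype.ext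
  simp [sgClamp, max_eq_left hu, max_eq_left hv]

variable (f g : ℝ → ℝ) (c : ℝ)

/-- The "unfolded" candidate solution attached to a weighted profile `φ`. -/
def sgA (φ : sgX) (u v : ℝ) : ℝ :=
  f (max u 0) + g (max v 0) - c + Real.exp (2 * (max u 0 + max v 0)) * φ (sgClamp (u, v))

/-- Integrand. -/
def sgG (φ : sgX) (u v : ℝ) : ℝ := Real.sin (sgA f g c φ u v)

/-- Inner integral. -/
def sgInner (φ : sgX) (u t : ℝ) : ℝ := ∫ v in (0:ℝ)..t, sgG f g c φ u v

/-- Double integral. -/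
def sgH (φ : sgX) (x t : ℝ) : ℝ := ∫ u in (0:ℝ)..x, sgInner f g c φ u t

lemma sgA_apply (φ : sgX) {u v : ℝ} (hu : 0 ≤ u) (hv : 0 ≤ v) :
    sgA f g c φ u v = f u + g v - c + Real.exp (2 * (u + v)) * φ ⟨(u, v), ⟨hu, hv⟩⟩ := by
  rw [sgA, sgClamp_of_nonneg hu hv, max_eq_left hu, max_eq_left hv]

variable {f g}

lemma sgA_continuous' {X : Type} [TopologicalSpace X] (hf : ContinuousOn f (Set.Ici 0))
    (hg : ContinuousOn g (Set.Ici 0)) (φ : sgX) {a b : X → ℝ} (ha : Continuous a)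
    (hb : Continuous b) : Continuous fun x => sgA f g c φ (a x) (b x) := by
  unfold sgA
  apply Continuous.add
  · apply Continuous.sub ?_ continuous_const
    exact (hf.comp_continuous (ha.max continuous_const) fun p => Set.mem_Ici.mpr (le_max_right _ _)).add
      (hg.comp_continuous (hb.max continuous_const) fun p => Set.mem_Ici.mpr (le_max_right _ _))
  · exact (Real.continuous_exp.comp (continuous_const.mul
      ((ha.max continuous_const).add (hb.max continuous_const)))).mul
      (φ.continuous.comp (sgClamp_continuous.comp (ha.prodMk hb)))

lemma sgG_continuous' {X : Type} [TopologicalSpace X] (hf : ContinuousOn f (Set.Ici 0))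
    (hg : ContinuousOn g (Set.Ici 0)) (φ : sgX) {a b : X → ℝ} (ha : Continuous a)
    (hb : Continuous b) : Continuous fun x => sgG f g c φ (a x) (b x) :=
  Real.continuous_sin.comp (sgA_continuous' c hf hg φ ha hb)

lemma sgInner_continuous' {X : Type} [TopologicalSpace X] (hf : ContinuousOn f (Set.Ici 0))
    (hg : ContinuousOn g (Set.Ici 0)) (φ : sgX) {a b : X → ℝ} (ha : Continuous a)
    (hb : Continuous b) : Continuous fun x => sgInner f g c φ (a x) (b x) := by
  have h : Continuous (Function.uncurry fun (x : X) v => sgG f g c φ (a x) v) :=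
    sgG_continuous' c hf hg φ (ha.comp continuous_fst) continuous_snd
  exact intervalIntegral.continuous_parametric_intervalIntegral_of_continuous h hb

lemma sgH_continuous' {X : Type} [TopologicalSpace X] (hf : ContinuousOn f (Set.Ici 0))
    (hg : ContinuousOn g (Set.Ici 0)) (φ : sgX) {a b : X → ℝ} (ha : Continuous a)
    (hb : Continuous b) : Continuous fun x => sgH f g c φ (a x) (b x) := by
  have h : Continuous (Function.uncurry fun (x : X) u => sgInner f g c φ u (b x)) :=
    sgInner_continuous' c hf hg φ continuous_snd (hb.comp continuous_fst)
  exact intervalIntegral.continuous_parametric_intervalIntegral_of_continuous h ha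

lemma sgInner_bound (φ : sgX) (u t : ℝ) : |sgInner f g c φ u t| ≤ |t| := by
  have h := intervalIntegral.norm_integral_le_of_norm_le_const
    (a := (0:ℝ)) (b := t) (C := 1) (f := fun v => sgG f g c φ u v)
    (fun v _ => by simpa [sgG, Real.norm_eq_abs] using Real.abs_sin_le_one (sgA f g c φ u v))
  simpa [sgInner, Real.norm_eq_abs] using h

lemma sgH_bound (φ : sgX) (x t : ℝ) : |sgH f g c φ x t| ≤ |t| * |x| := by
  have h := intervalIntegral.norm_integral_le_of_norm_le_const
    (a := (0:ℝ)) (b := x) (C := |t|) (f := fun u => sgInner f g c φ u t)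
    (fun u _ => by simpa [Real.norm_eq_abs] using sgInner_bound c φ u t)
  simpa [sgH, Real.norm_eq_abs] using h

lemma sg_weight_aux {x : ℝ} (hx : 0 ≤ x) : x * Real.exp (-(2 * x)) ≤ 1 := by
  rw [Real.exp_neg, ← div_eq_mul_inv, div_le_one (Real.exp_pos _)]
  nlinarith [Real.add_one_le_exp (2 * x)]

/-- The key integral computation. -/
lemma sg_integral_exp (t : ℝ) :
    (∫ v in (0:ℝ)..t, Real.exp (2 * v)) = (Real.exp (2 * t) - 1) / 2 := by
  have : ∀ v ∈ Set.uIcc (0:ℝ) t, HasDerivAt (fun w => Real.exp (2 * w) / 2)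
      (Real.exp (2 * v)) v := by
    intro v _
    have h1 : HasDerivAt (fun w : ℝ => 2 * w) 2 v := by
      simpa using (hasDerivAt_id v).const_mul 2
    have h2 := (Real.hasDerivAt_exp (2 * v)).comp v h1
    have h3 := h2.div_const 2
    simpa [mul_comm, mul_div_assoc] using h3
  have h := intervalIntegral.integral_eq_sub_of_hasDerivAt this
    ((Real.continuous_exp.comp (continuous_const.mul continuous_id)).intervalIntegrable 0 t)
  simp only [mul_zero, Real.exp_zero] at h
  rw [h]; ring

section Part2
open MeasureTheory intervalIntegral Real Set
variable {f g : ℝ → ℝ} (c : ℝ)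

lemma sg_abs_sin_sub_sin (a b : ℝ) : |Real.sin a - Real.sin b| ≤ |a - b| := by
  rw [Real.sin_sub_sin]
  calc |2 * Real.sin ((a - b) / 2) * Real.cos ((a + b) / 2)|
      = 2 * |Real.sin ((a - b) / 2)| * |Real.cos ((a + b) / 2)| := by
        rw [abs_mul, abs_mul]; norm_num
    _ ≤ 2 * |(a - b) / 2| * 1 := by
        apply mul_le_mul ?_ (Real.abs_cos_le_one _) (abs_nonneg _) (by positivity)
        exact mul_le_mul_of_nonneg_left (Real.abs_sin_le_abs) (by norm_num)
    _ = |a - b| := by rw [abs_div]; simp; ring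

lemma sgG_sub_le (φ ψ : sgX) {u v : ℝ} (hu : 0 ≤ u) (hv : 0 ≤ v) :
    |sgG f g c φ u v - sgG f g c ψ u v|
      ≤ Real.exp (2 * u) * Real.exp (2 * v) * dist φ ψ := by
  have h1 := sg_abs_sin_sub_sin (sgA f g c φ u v) (sgA f g c ψ u v)
  have h2 : sgA f g c φ u v - sgA f g c ψ u v
      = Real.exp (2 * (u + v)) * (φ ⟨(u, v), ⟨hu, hv⟩⟩ - ψ ⟨(u, v), ⟨hu, hv⟩⟩) := by
    rw [sgA_apply f g c φ hu hv, sgA_apply f g c ψ hu hv]; ring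
  refine le_trans h1 ?_
  rw [h2, abs_mul, abs_of_nonneg (Real.exp_pos _).le, ← Real.exp_add]
  rw [show 2 * u + 2 * v = 2 * (u + v) by ring]
  apply mul_le_mul_of_nonneg_left ?_ (Real.exp_pos _).le
  have := ψ.dist_coe_le_dist (f := φ) (⟨(u, v), ⟨hu, hv⟩⟩ : sgQ)
  rwa [Real.dist_eq] at this

lemma sgInner_sub_le (hf : ContinuousOn f (Set.Ici 0)) (hg : ContinuousOn g (Set.Ici 0))
    (φ ψ : sgX) {u t : ℝ} (hu : 0 ≤ u) (ht : 0 ≤ t) :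
    |sgInner f g c φ u t - sgInner f g c ψ u t|
      ≤ Real.exp (2 * u) * ((Real.exp (2 * t) - 1) / 2) * dist φ ψ := by
  have hIφ : IntervalIntegrable (fun v => sgG f g c φ u v) volume 0 t :=
    (sgG_continuous' c hf hg φ continuous_const continuous_id).intervalIntegrable 0 t
  have hIψ : IntervalIntegrable (fun v => sgG f g c ψ u v) volume 0 t :=
    (sgG_continuous' c hf hg ψ continuous_const continuous_id).intervalIntegrable 0 t
  have hsub : sgInner f g c φ u t - sgInner f g c ψ u t
      = ∫ v in (0:ℝ)..t, (sgG f g c φ u v - sgG f g c ψ u v) := by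
    rw [sgInner, sgInner, intervalIntegral.integral_sub hIφ hIψ]
  have hbd : IntervalIntegrable
      (fun v => Real.exp (2 * u) * Real.exp (2 * v) * dist φ ψ) volume 0 t :=
    (((continuous_const.mul (Real.continuous_exp.comp
      (continuous_const.mul continuous_id))).mul continuous_const)).intervalIntegrable 0 t
  have hae : ∀ᵐ v ∂(volume.restrict (Set.uIoc (0:ℝ) t)),
      ‖sgG f g c φ u v - sgG f g c ψ u v‖
        ≤ Real.exp (2 * u) * Real.exp (2 * v) * dist φ ψ := by
    apply ae_restrict_of_forall_mem measurableSet_uIoc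
    intro v hv
    rw [Set.uIoc_of_le ht] at hv
    exact sgG_sub_le c φ ψ hu hv.1.le
  have h := intervalIntegral.norm_integral_le_abs_of_norm_le hae hbd
  rw [← hsub] at h
  refine le_trans h ?_
  have hcomp : (∫ v in (0:ℝ)..t, Real.exp (2 * u) * Real.exp (2 * v) * dist φ ψ)
      = Real.exp (2 * u) * ((Real.exp (2 * t) - 1) / 2) * dist φ ψ := by
    rw [show (fun v => Real.exp (2 * u) * Real.exp (2 * v) * dist φ ψ)
        = fun v => (Real.exp (2 * u) * dist φ ψ) * Real.exp (2 * v) by funext v; ring]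
    rw [intervalIntegral.integral_const_mul, sg_integral_exp]
    ring
  have hE : (0:ℝ) ≤ Real.exp (2 * u) * ((Real.exp (2 * t) - 1) / 2) * dist φ ψ := by
    have h1 : (1:ℝ) ≤ Real.exp (2 * t) := Real.one_le_exp (by positivity)
    have h2 := dist_nonneg (x := φ) (y := ψ)
    have h3 := (Real.exp_pos (2 * u)).le
    have h4 : (0:ℝ) ≤ (Real.exp (2 * t) - 1) / 2 := by linarith
    exact mul_nonneg (mul_nonneg h3 h4) h2
  rw [hcomp, abs_of_nonneg hE]
end Part2
section Part3
open MeasureTheory intervalIntegral Real Set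
open scoped NNReal
variable {f g : ℝ → ℝ} (c : ℝ)

lemma sgH_sub_le (hf : ContinuousOn f (Set.Ici 0)) (hg : ContinuousOn g (Set.Ici 0))
    (φ ψ : sgX) {x t : ℝ} (hx : 0 ≤ x) (ht : 0 ≤ t) :
    |sgH f g c φ x t - sgH f g c ψ x t|
      ≤ ((Real.exp (2 * x) - 1) / 2) * ((Real.exp (2 * t) - 1) / 2) * dist φ ψ := by
  have hIφ : IntervalIntegrable (fun u => sgInner f g c φ u t) volume 0 x :=
    (sgInner_continuous' c hf hg φ continuous_id continuous_const).intervalIntegrable 0 x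
  have hIψ : IntervalIntegrable (fun u => sgInner f g c ψ u t) volume 0 x :=
    (sgInner_continuous' c hf hg ψ continuous_id continuous_const).intervalIntegrable 0 x
  have hsub : sgH f g c φ x t - sgH f g c ψ x t
      = ∫ u in (0:ℝ)..x, (sgInner f g c φ u t - sgInner f g c ψ u t) := by
    rw [sgH, sgH, intervalIntegral.integral_sub hIφ hIψ]
  set C := ((Real.exp (2 * t) - 1) / 2) * dist φ ψ with hC
  have hbd : IntervalIntegrable (fun u => Real.exp (2 * u) * C) volume 0 x :=
    ((Real.continuous_exp.comp (continuous_const.mul continuous_id)).mul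
      continuous_const).intervalIntegrable 0 x
  have hae : ∀ᵐ u ∂(volume.restrict (Set.uIoc (0:ℝ) x)),
      ‖sgInner f g c φ u t - sgInner f g c ψ u t‖ ≤ Real.exp (2 * u) * C := by
    apply ae_restrict_of_forall_mem measurableSet_uIoc
    intro u hu
    rw [Set.uIoc_of_le hx] at hu
    have := sgInner_sub_le c hf hg φ ψ hu.1.le ht
    rw [Real.norm_eq_abs]
    refine le_trans this (le_of_eq ?_)
    rw [hC]; ring
  have h := intervalIntegral.norm_integral_le_abs_of_norm_le hae hbd
  rw [← hsub] at h
  refine le_trans h ?_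
  have hcomp : (∫ u in (0:ℝ)..x, Real.exp (2 * u) * C)
      = ((Real.exp (2 * x) - 1) / 2) * C := by
    rw [intervalIntegral.integral_mul_const, sg_integral_exp]
  have hE : (0:ℝ) ≤ ((Real.exp (2 * x) - 1) / 2) * C := by
    have h1 : (1:ℝ) ≤ Real.exp (2 * x) := Real.one_le_exp (by positivity)
    have h2 : (1:ℝ) ≤ Real.exp (2 * t) := Real.one_le_exp (by positivity)
    have h3 := dist_nonneg (x := φ) (y := ψ)
    rw [hC]
    have : (0:ℝ) ≤ (Real.exp (2 * t) - 1) / 2 := by linarith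
    have : (0:ℝ) ≤ C := mul_nonneg this h3
    nlinarith
  rw [hcomp, abs_of_nonneg hE, hC]
  exact le_of_eq (by ring)

lemma sg_weight_continuous :
    Continuous fun q : sgQ => Real.exp (-(2 * ((q : ℝ × ℝ).1 + (q : ℝ × ℝ).2))) :=
  Real.continuous_exp.comp ((continuous_const.mul
    ((continuous_fst.comp continuous_subtype_val).add
      (continuous_snd.comp continuous_subtype_val))).neg)

/-- The Picard operator on weighted profiles. -/
def sgT (hf : ContinuousOn f (Set.Ici 0)) (hg : ContinuousOn g (Set.Ici 0))
    (φ : sgX) : sgX :=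
  BoundedContinuousFunction.ofNormedAddCommGroup
    (fun q : sgQ => Real.exp (-(2 * ((q : ℝ × ℝ).1 + (q : ℝ × ℝ).2)))
      * sgH f g c φ (q : ℝ × ℝ).1 (q : ℝ × ℝ).2)
    (sg_weight_continuous.mul (sgH_continuous' c hf hg φ
      (continuous_fst.comp continuous_subtype_val)
      (continuous_snd.comp continuous_subtype_val)))
    1
    (by
      rintro ⟨⟨x, t⟩, hx, ht⟩
      simp only [Real.norm_eq_abs]
      have hx : (0:ℝ) ≤ x := hx
      have ht : (0:ℝ) ≤ t := ht
      rw [abs_mul, abs_of_nonneg (Real.exp_pos _).le]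
      have h1 := sgH_bound (f := f) (g := g) c φ x t
      have h2 : Real.exp (-(2 * (x + t))) * (|t| * |x|)
          = (x * Real.exp (-(2 * x))) * (t * Real.exp (-(2 * t))) := by
        rw [abs_of_nonneg hx, abs_of_nonneg ht,
          show -(2 * (x + t)) = -(2 * x) + -(2 * t) by ring, Real.exp_add]
        ring
      calc Real.exp (-(2 * (x + t))) * |sgH f g c φ x t|
          ≤ Real.exp (-(2 * (x + t))) * (|t| * |x|) :=
            mul_le_mul_of_nonneg_left h1 (Real.exp_pos _).le
        _ = (x * Real.exp (-(2 * x))) * (t * Real.exp (-(2 * t))) := h2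
        _ ≤ 1 * 1 := mul_le_mul (sg_weight_aux hx) (sg_weight_aux ht)
            (mul_nonneg ht (Real.exp_pos _).le) zero_le_one
        _ = 1 := by norm_num)

lemma sgT_apply (hf : ContinuousOn f (Set.Ici 0)) (hg : ContinuousOn g (Set.Ici 0))
    (φ : sgX) (q : sgQ) :
    sgT c hf hg φ q = Real.exp (-(2 * ((q : ℝ × ℝ).1 + (q : ℝ × ℝ).2)))
      * sgH f g c φ (q : ℝ × ℝ).1 (q : ℝ × ℝ).2 := rfl

lemma sg_weight_aux2 {x : ℝ} (hx : 0 ≤ x) :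
    Real.exp (-(2 * x)) * ((Real.exp (2 * x) - 1) / 2) ≤ 1 / 2 ∧
      0 ≤ Real.exp (-(2 * x)) * ((Real.exp (2 * x) - 1) / 2) := by
  have h1 : (1:ℝ) ≤ Real.exp (2 * x) := Real.one_le_exp (by positivity)
  have h2 : Real.exp (-(2 * x)) * Real.exp (2 * x) = 1 := by
    rw [← Real.exp_add]; norm_num
  have h3 := (Real.exp_pos (-(2 * x))).le
  constructor <;> nlinarith

lemma sgT_contract (hf : ContinuousOn f (Set.Ici 0)) (hg : ContinuousOn g (Set.Ici 0)) :
    ContractingWith (1/4 : ℝ≥0) (sgT c hf hg) := by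
  constructor
  · exact NNReal.coe_lt_coe.mp (by norm_num)
  · apply LipschitzWith.of_dist_le_mul
    intro φ ψ
    rw [BoundedContinuousFunction.dist_le (by positivity)]
    rintro ⟨⟨x, t⟩, hx, ht⟩
    have hx : (0:ℝ) ≤ x := hx
    have ht : (0:ℝ) ≤ t := ht
    rw [Real.dist_eq, sgT_apply, sgT_apply]
    have hd : |Real.exp (-(2 * (x + t))) * sgH f g c φ x t
        - Real.exp (-(2 * (x + t))) * sgH f g c ψ x t|
        = Real.exp (-(2 * (x + t))) * |sgH f g c φ x t - sgH f g c ψ x t| := by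
      rw [← mul_sub, abs_mul, abs_of_nonneg (Real.exp_pos _).le]
    rw [hd]
    have h1 := sgH_sub_le c hf hg φ ψ hx ht
    have key : Real.exp (-(2 * (x + t)))
        * (((Real.exp (2 * x) - 1) / 2) * ((Real.exp (2 * t) - 1) / 2) * dist φ ψ)
        ≤ (1/4) * dist φ ψ := by
      have e1 := sg_weight_aux2 hx
      have e2 := sg_weight_aux2 ht
      have hsplit : Real.exp (-(2 * (x + t)))
          * (((Real.exp (2 * x) - 1) / 2) * ((Real.exp (2 * t) - 1) / 2) * dist φ ψ)
          = (Real.exp (-(2 * x)) * ((Real.exp (2 * x) - 1) / 2))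
            * (Real.exp (-(2 * t)) * ((Real.exp (2 * t) - 1) / 2)) * dist φ ψ := by
        rw [show -(2 * (x + t)) = -(2 * x) + -(2 * t) by ring, Real.exp_add]; ring
      rw [hsplit]
      have hab : (Real.exp (-(2 * x)) * ((Real.exp (2 * x) - 1) / 2))
          * (Real.exp (-(2 * t)) * ((Real.exp (2 * t) - 1) / 2)) ≤ (1/2) * (1/2) :=
        mul_le_mul e1.1 e2.1 e2.2 (by norm_num)
      have := dist_nonneg (x := φ) (y := ψ)
      nlinarith [mul_nonneg e1.2 e2.2]
    calc Real.exp (-(2 * (x + t))) * |sgH f g c φ x t - sgH f g c ψ x t|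
        ≤ Real.exp (-(2 * (x + t)))
          * (((Real.exp (2 * x) - 1) / 2) * ((Real.exp (2 * t) - 1) / 2) * dist φ ψ) :=
          mul_le_mul_of_nonneg_left h1 (Real.exp_pos _).le
      _ ≤ (1/4) * dist φ ψ := key
      _ = ((1/4 : ℝ≥0) : ℝ) * dist φ ψ := by norm_num

end Part3
section Part4
open MeasureTheory intervalIntegral Real Set
open scoped NNReal
variable {f g : ℝ → ℝ} (c : ℝ)

lemma sg_exp_cancel (s w : ℝ) : Real.exp (2 * s) * (Real.exp (-(2 * s)) * w) = w := by
  rw [← mul_assoc, ← Real.exp_add]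
  simp

lemma sg_weight_bound {x t D : ℝ} (hx : 0 ≤ x) (ht : 0 ≤ t) (hD : |D| ≤ |t| * |x|) :
    Real.exp (-(2 * (x + t))) * |D| ≤ 1 := by
  have h2 : Real.exp (-(2 * (x + t))) * (|t| * |x|)
      = (x * Real.exp (-(2 * x))) * (t * Real.exp (-(2 * t))) := by
    rw [abs_of_nonneg hx, abs_of_nonneg ht,
      show -(2 * (x + t)) = -(2 * x) + -(2 * t) by ring, Real.exp_add]
    ring
  calc Real.exp (-(2 * (x + t))) * |D|
      ≤ Real.exp (-(2 * (x + t))) * (|t| * |x|) :=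
        mul_le_mul_of_nonneg_left hD (Real.exp_pos _).le
    _ = (x * Real.exp (-(2 * x))) * (t * Real.exp (-(2 * t))) := h2
    _ ≤ 1 * 1 := mul_le_mul (sg_weight_aux hx) (sg_weight_aux ht)
        (mul_nonneg ht (Real.exp_pos _).le) zero_le_one
    _ = 1 := by norm_num

/-- The double integral of `sin ∘ Z` is bounded by `|t| * |x|`. -/
lemma sg_sin_double_integral_bound (Z : ℝ → ℝ → ℝ) (x t : ℝ) :
    |∫ u in (0:ℝ)..x, ∫ v in (0:ℝ)..t, Real.sin (Z u v)| ≤ |t| * |x| := by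
  have hin : ∀ u : ℝ, |∫ v in (0:ℝ)..t, Real.sin (Z u v)| ≤ |t| := by
    intro u
    have h := intervalIntegral.norm_integral_le_of_norm_le_const
      (a := (0:ℝ)) (b := t) (C := 1) (f := fun v => Real.sin (Z u v))
      (fun v _ => by simpa [Real.norm_eq_abs] using Real.abs_sin_le_one (Z u v))
    simpa [Real.norm_eq_abs] using h
  have h := intervalIntegral.norm_integral_le_of_norm_le_const
    (a := (0:ℝ)) (b := x) (C := |t|)
    (f := fun u => ∫ v in (0:ℝ)..t, Real.sin (Z u v))
    (fun u _ => by simpa [Real.norm_eq_abs] using hin u)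
  simpa [Real.norm_eq_abs] using h

theorem sineGordon_goursat_exists_unique' (f g : ℝ → ℝ) (c : ℝ)
    (hf : ContinuousOn f (Set.Ici 0)) (hg : ContinuousOn g (Set.Ici 0))
    (hf0 : f 0 = c) (hg0 : g 0 = c) :
    ∃ Y : ℝ → ℝ → ℝ,
      (ContinuousOn (fun p : ℝ × ℝ => Y p.1 p.2) (Set.Ici 0 ×ˢ Set.Ici 0) ∧
        ∀ x t : ℝ, 0 ≤ x → 0 ≤ t →
          Y x t = f x + g t - c
            + ∫ u in (0 : ℝ)..x, ∫ v in (0 : ℝ)..t, Real.sin (Y u v)) ∧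
      ∀ Z : ℝ → ℝ → ℝ,
        (ContinuousOn (fun p : ℝ × ℝ => Z p.1 p.2) (Set.Ici 0 ×ˢ Set.Ici 0) ∧
          ∀ x t : ℝ, 0 ≤ x → 0 ≤ t →
            Z x t = f x + g t - c
              + ∫ u in (0 : ℝ)..x, ∫ v in (0 : ℝ)..t, Real.sin (Z u v)) →
        ∀ x t : ℝ, 0 ≤ x → 0 ≤ t → Z x t = Y x t := by
  have hK := sgT_contract c hf hg
  set Φ : sgX := ContractingWith.fixedPoint (sgT c hf hg) hK with hΦ
  have hfix : sgT c hf hg Φ = Φ := hK.fixedPoint_isFixedPt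
  -- the candidate solution
  refine ⟨fun x t => sgA f g c Φ x t, ⟨?_, ?_⟩, ?_⟩
  · exact (sgA_continuous' c hf hg Φ continuous_fst continuous_snd).continuousOn
  · -- the integral equation
    intro x t hx ht
    have hq : Real.exp (-(2 * (x + t))) * sgH f g c Φ x t = Φ ⟨(x, t), ⟨hx, ht⟩⟩ := by
      conv_rhs => rw [← hfix]
      rfl
    have h2 : sgH f g c Φ x t = Real.exp (2 * (x + t)) * Φ ⟨(x, t), ⟨hx, ht⟩⟩ := by
      rw [← hq, sg_exp_cancel]
    have h3 : (∫ u in (0:ℝ)..x, ∫ v in (0:ℝ)..t, Real.sin (sgA f g c Φ u v))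
        = sgH f g c Φ x t := by
      simp only [sgH, sgInner, sgG]
    show sgA f g c Φ x t = f x + g t - c
      + ∫ u in (0:ℝ)..x, ∫ v in (0:ℝ)..t, Real.sin (sgA f g c Φ u v)
    rw [sgA_apply f g c Φ hx ht, h3, h2]
  · -- uniqueness
    rintro Z ⟨hZc, hZeq⟩ x t hx ht
    -- the weighted profile of Z
    have hcont : Continuous fun q : sgQ =>
        Real.exp (-(2 * ((q : ℝ × ℝ).1 + (q : ℝ × ℝ).2)))
          * (Z (q : ℝ × ℝ).1 (q : ℝ × ℝ).2 - f (q : ℝ × ℝ).1 - g (q : ℝ × ℝ).2 + c) := by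
      apply sg_weight_continuous.mul
      have hZ : Continuous fun q : sgQ => Z (q : ℝ × ℝ).1 (q : ℝ × ℝ).2 := hZc.restrict
      have hfq : Continuous fun q : sgQ => f (q : ℝ × ℝ).1 :=
        hf.comp_continuous (continuous_fst.comp continuous_subtype_val) fun q => q.2.1
      have hgq : Continuous fun q : sgQ => g (q : ℝ × ℝ).2 :=
        hg.comp_continuous (continuous_snd.comp continuous_subtype_val) fun q => q.2.2
      exact ((hZ.sub hfq).sub hgq).add continuous_const
    have hDeq : ∀ x t : ℝ, 0 ≤ x → 0 ≤ t → Z x t - f x - g t + c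
        = ∫ u in (0:ℝ)..x, ∫ v in (0:ℝ)..t, Real.sin (Z u v) := by
      intro x t hx ht
      have := hZeq x t hx ht
      linarith
    set ζ : sgX := BoundedContinuousFunction.ofNormedAddCommGroup
      (fun q : sgQ => Real.exp (-(2 * ((q : ℝ × ℝ).1 + (q : ℝ × ℝ).2)))
        * (Z (q : ℝ × ℝ).1 (q : ℝ × ℝ).2 - f (q : ℝ × ℝ).1 - g (q : ℝ × ℝ).2 + c))
      hcont 1
      (by
        rintro ⟨⟨x, t⟩, hx, ht⟩
        have hx : (0:ℝ) ≤ x := hx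
        have ht : (0:ℝ) ≤ t := ht
        simp only [Real.norm_eq_abs]
        rw [abs_mul, abs_of_nonneg (Real.exp_pos _).le]
        apply sg_weight_bound hx ht
        rw [hDeq x t hx ht]
        exact sg_sin_double_integral_bound Z x t) with hζ
    have hζ_apply : ∀ (x t : ℝ) (hx : 0 ≤ x) (ht : 0 ≤ t),
        ζ ⟨(x, t), ⟨hx, ht⟩⟩ = Real.exp (-(2 * (x + t))) * (Z x t - f x - g t + c) := by
      intro x t hx ht; rfl
    -- ζ is a fixed point of sgT
    have hfix2 : Function.IsFixedPt (sgT c hf hg) ζ := by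
      apply BoundedContinuousFunction.ext
      rintro ⟨⟨x, t⟩, hx, ht⟩
      have hx : (0:ℝ) ≤ x := hx
      have ht : (0:ℝ) ≤ t := ht
      rw [sgT_apply, hζ_apply x t hx ht]
      congr 1
      -- sgH ζ x t = Z x t - f x - g t + c
      rw [hDeq x t hx ht]
      simp only [sgH]
      apply intervalIntegral.integral_congr
      intro u hu
      rw [Set.uIcc_of_le hx] at hu
      simp only [sgInner]
      apply intervalIntegral.integral_congr
      intro v hv
      rw [Set.uIcc_of_le ht] at hv
      have hA : sgA f g c ζ u v = Z u v := by
        rw [sgA_apply f g c ζ hu.1 hv.1, hζ_apply u v hu.1 hv.1, sg_exp_cancel]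
        ring
      simp only [sgG]
      rw [hA]
    have hζΦ : ζ = Φ := hK.fixedPoint_unique hfix2
    -- conclude
    have h4 : Z x t = f x + g t - c + Real.exp (2 * (x + t)) * ζ ⟨(x, t), ⟨hx, ht⟩⟩ := by
      rw [hζ_apply x t hx ht, sg_exp_cancel]
      ring
    rw [h4, hζΦ, ← sgA_apply f g c Φ hx ht]
end Part4
end SineGordonAux

/-- Existence and uniqueness (Angelova–Georgiev–Angelov) for the Goursat problem for the
sine-Gordon equation on the quarter-plane, in integral form: there is exactly one
continuous `Y` on `[0,∞) × [0,∞)` with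
`Y(x,t) = f(x) + g(t) - c + ∫₀ˣ∫₀ᵗ sin(Y(u,v)) dv du`. -/
theorem sineGordon_goursat_exists_unique (f g : ℝ → ℝ) (c : ℝ)
    (hf : ContinuousOn f (Set.Ici 0)) (hg : ContinuousOn g (Set.Ici 0))
    (hf0 : f 0 = c) (hg0 : g 0 = c) :
    ∃ Y : ℝ → ℝ → ℝ,
      (ContinuousOn (fun p : ℝ × ℝ => Y p.1 p.2) (Set.Ici 0 ×ˢ Set.Ici 0) ∧
        ∀ x t : ℝ, 0 ≤ x → 0 ≤ t →
          Y x t = f x + g t - c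
            + ∫ u in (0 : ℝ)..x, ∫ v in (0 : ℝ)..t, Real.sin (Y u v)) ∧
      ∀ Z : ℝ → ℝ → ℝ,
        (ContinuousOn (fun p : ℝ × ℝ => Z p.1 p.2) (Set.Ici 0 ×ˢ Set.Ici 0) ∧
          ∀ x t : ℝ, 0 ≤ x → 0 ≤ t →
            Z x t = f x + g t - c
              + ∫ u in (0 : ℝ)..x, ∫ v in (0 : ℝ)..t, Real.sin (Z u v)) →
        ∀ x t : ℝ, 0 ≤ x → 0 ≤ t → Z x t = Y x t := by
  exact sineGordon_goursat_exists_unique' f g c hf hg hf0 hg0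
end

section
/- Let F : ℝ → ℝ be globally Lipschitz, let a, b > 0 and 0 < x₀ ≤ a, 0 < t₀ ≤ b. For k = 1, 2 let fₖ : [0,a] → ℝ and gₖ : [0,b] → ℝ be continuous with fₖ(0) = gₖ(0) = cₖ, and let Yₖ be a continuous function on [0,a] × [0,b] satisfying Yₖ(x,t) = fₖ(x) + gₖ(t) - cₖ + ∫₀ˣ ∫₀ᵗ F(Yₖ(u,v)) dv du for all (x,t) ∈ [0,a] × [0,b]. If f₁(x) = f₂(x) for all x ∈ [0,x₀] and g₁(t) = g₂(t) for all t ∈ [0,t₀], then Y₁(x,t) = Y₂(x,t) for all (x,t) ∈ [0,x₀] × [0,t₀]. -/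
open Set intervalIntegral MeasureTheory Filter

/-- Domain of dependence for the Goursat integral equation: if two solutions have data
agreeing on `[0,x₀]` and `[0,t₀]`, then the solutions agree on `[0,x₀] × [0,t₀]`. -/
theorem goursat_domain_of_dependence (F : ℝ → ℝ) (hF : ∃ K : NNReal, LipschitzWith K F)
    (a b x₀ t₀ : ℝ) (ha : 0 < a) (hb : 0 < b)
    (hx₀ : 0 < x₀) (hx₀a : x₀ ≤ a) (ht₀ : 0 < t₀) (ht₀b : t₀ ≤ b)
    (f₁ f₂ g₁ g₂ : ℝ → ℝ) (c₁ c₂ : ℝ)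
    (hf₁ : ContinuousOn f₁ (Set.Icc 0 a)) (hg₁ : ContinuousOn g₁ (Set.Icc 0 b))
    (hf₂ : ContinuousOn f₂ (Set.Icc 0 a)) (hg₂ : ContinuousOn g₂ (Set.Icc 0 b))
    (hf₁0 : f₁ 0 = c₁) (hg₁0 : g₁ 0 = c₁) (hf₂0 : f₂ 0 = c₂) (hg₂0 : g₂ 0 = c₂)
    (Y₁ Y₂ : ℝ → ℝ → ℝ)
    (hY₁ : ContinuousOn (fun p : ℝ × ℝ => Y₁ p.1 p.2) (Set.Icc 0 a ×ˢ Set.Icc 0 b))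
    (hY₂ : ContinuousOn (fun p : ℝ × ℝ => Y₂ p.1 p.2) (Set.Icc 0 a ×ˢ Set.Icc 0 b))
    (heq₁ : ∀ x ∈ Set.Icc (0 : ℝ) a, ∀ t ∈ Set.Icc (0 : ℝ) b,
      Y₁ x t = f₁ x + g₁ t - c₁ + ∫ u in (0 : ℝ)..x, ∫ v in (0 : ℝ)..t, F (Y₁ u v))
    (heq₂ : ∀ x ∈ Set.Icc (0 : ℝ) a, ∀ t ∈ Set.Icc (0 : ℝ) b,
      Y₂ x t = f₂ x + g₂ t - c₂ + ∫ u in (0 : ℝ)..x, ∫ v in (0 : ℝ)..t, F (Y₂ u v))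
    (hfagree : ∀ x ∈ Set.Icc (0 : ℝ) x₀, f₁ x = f₂ x)
    (hgagree : ∀ t ∈ Set.Icc (0 : ℝ) t₀, g₁ t = g₂ t) :
    ∀ x ∈ Set.Icc (0 : ℝ) x₀, ∀ t ∈ Set.Icc (0 : ℝ) t₀, Y₁ x t = Y₂ x t := by
  obtain ⟨K, hK⟩ := hF
  have hK0 : (0:ℝ) ≤ K := K.2
  -- clamping maps
  set px : ℝ → ℝ := fun x => min (max x 0) a with hpx
  set pt : ℝ → ℝ := fun t => min (max t 0) b with hpt
  have hpxc : Continuous px := by fun_prop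
  have hptc : Continuous pt := by fun_prop
  have hpxm : ∀ x, px x ∈ Set.Icc (0:ℝ) a := fun x =>
    ⟨le_min (le_max_right _ _) ha.le, min_le_right _ _⟩
  have hptm : ∀ t, pt t ∈ Set.Icc (0:ℝ) b := fun t =>
    ⟨le_min (le_max_right _ _) hb.le, min_le_right _ _⟩
  have hpxid : ∀ x ∈ Set.Icc (0:ℝ) a, px x = x := fun x hx => by
    simp only [hpx]; rw [max_eq_left hx.1, min_eq_left hx.2]
  have hptid : ∀ t ∈ Set.Icc (0:ℝ) b, pt t = t := fun t ht => by
    simp only [hpt]; rw [max_eq_left ht.1, min_eq_left ht.2]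
  -- extended solutions
  set Z₁ : ℝ → ℝ → ℝ := fun x t => Y₁ (px x) (pt t) with hZ₁
  set Z₂ : ℝ → ℝ → ℝ := fun x t => Y₂ (px x) (pt t) with hZ₂
  have hcl : Continuous (fun p : ℝ × ℝ => (px p.1, pt p.2)) := by fun_prop
  have hZ₁c : Continuous (fun p : ℝ × ℝ => Z₁ p.1 p.2) :=
    hY₁.comp_continuous hcl (fun p => ⟨hpxm _, hptm _⟩)
  have hZ₂c : Continuous (fun p : ℝ × ℝ => Z₂ p.1 p.2) :=
    hY₂.comp_continuous hcl (fun p => ⟨hpxm _, hptm _⟩)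
  have hZ₁eq : ∀ x ∈ Set.Icc (0:ℝ) a, ∀ t ∈ Set.Icc (0:ℝ) b, Z₁ x t = Y₁ x t := by
    intro x hx t ht; simp only [hZ₁, hpxid x hx, hptid t ht]
  have hZ₂eq : ∀ x ∈ Set.Icc (0:ℝ) a, ∀ t ∈ Set.Icc (0:ℝ) b, Z₂ x t = Y₂ x t := by
    intro x hx t ht; simp only [hZ₂, hpxid x hx, hptid t ht]
  -- the difference of integrands
  set D : ℝ → ℝ → ℝ := fun u v => F (Z₁ u v) - F (Z₂ u v) with hD
  have hDc : Continuous (fun p : ℝ × ℝ => D p.1 p.2) :=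
    (hK.continuous.comp hZ₁c).sub (hK.continuous.comp hZ₂c)
  have hDb : ∀ u v, |D u v| ≤ K * |Z₁ u v - Z₂ u v| := by
    intro u v
    have := hK.dist_le_mul (Z₁ u v) (Z₂ u v)
    simpa [Real.dist_eq, hD] using this
  -- inner integral function and its continuity
  have hinner : ∀ t : ℝ, Continuous (fun u => ∫ v in (0:ℝ)..t, D u v) := by
    intro t
    exact intervalIntegral.continuous_parametric_intervalIntegral_of_continuous'
      (f := fun u v => D u v) (μ := volume) hDc 0 t
  have hinner₁ : ∀ t : ℝ, Continuous (fun u => ∫ v in (0:ℝ)..t, F (Z₁ u v)) := by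
    intro t
    exact intervalIntegral.continuous_parametric_intervalIntegral_of_continuous'
      (f := fun u v => F (Z₁ u v)) (μ := volume) (hK.continuous.comp hZ₁c) 0 t
  have hinner₂ : ∀ t : ℝ, Continuous (fun u => ∫ v in (0:ℝ)..t, F (Z₂ u v)) := by
    intro t
    exact intervalIntegral.continuous_parametric_intervalIntegral_of_continuous'
      (f := fun u v => F (Z₂ u v)) (μ := volume) (hK.continuous.comp hZ₂c) 0 t
  -- consistency constants agree
  have hc : c₁ = c₂ := by
    have h0 : (0:ℝ) ∈ Set.Icc (0:ℝ) x₀ := ⟨le_refl _, hx₀.le⟩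
    rw [← hf₁0, ← hf₂0, hfagree 0 h0]
  -- subset facts
  have hsubx : Set.Icc (0:ℝ) x₀ ⊆ Set.Icc (0:ℝ) a := Set.Icc_subset_Icc le_rfl hx₀a
  have hsubt : Set.Icc (0:ℝ) t₀ ⊆ Set.Icc (0:ℝ) b := Set.Icc_subset_Icc le_rfl ht₀b
  -- key integral identity on the small rectangle
  have key : ∀ x ∈ Set.Icc (0:ℝ) x₀, ∀ t ∈ Set.Icc (0:ℝ) t₀,
      Y₁ x t - Y₂ x t = ∫ u in (0:ℝ)..x, ∫ v in (0:ℝ)..t, D u v := by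
    intro x hx t ht
    have hxa := hsubx hx
    have htb := hsubt ht
    have e₁ : (∫ u in (0:ℝ)..x, ∫ v in (0:ℝ)..t, F (Y₁ u v))
        = ∫ u in (0:ℝ)..x, ∫ v in (0:ℝ)..t, F (Z₁ u v) := by
      apply intervalIntegral.integral_congr
      intro u hu
      rw [Set.uIcc_of_le hx.1] at hu
      apply intervalIntegral.integral_congr
      intro v hv
      rw [Set.uIcc_of_le ht.1] at hv
      exact congrArg F (hZ₁eq u (Set.Icc_subset_Icc le_rfl hxa.2 hu) v
        (Set.Icc_subset_Icc le_rfl htb.2 hv)).symm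
    have e₂ : (∫ u in (0:ℝ)..x, ∫ v in (0:ℝ)..t, F (Y₂ u v))
        = ∫ u in (0:ℝ)..x, ∫ v in (0:ℝ)..t, F (Z₂ u v) := by
      apply intervalIntegral.integral_congr
      intro u hu
      rw [Set.uIcc_of_le hx.1] at hu
      apply intervalIntegral.integral_congr
      intro v hv
      rw [Set.uIcc_of_le ht.1] at hv
      exact congrArg F (hZ₂eq u (Set.Icc_subset_Icc le_rfl hxa.2 hu) v
        (Set.Icc_subset_Icc le_rfl htb.2 hv)).symm
    have hsplit : (∫ u in (0:ℝ)..x, ∫ v in (0:ℝ)..t, D u v)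
        = (∫ u in (0:ℝ)..x, ∫ v in (0:ℝ)..t, F (Z₁ u v))
          - ∫ u in (0:ℝ)..x, ∫ v in (0:ℝ)..t, F (Z₂ u v) := by
      rw [← intervalIntegral.integral_sub ((hinner₁ t).intervalIntegrable (μ := volume) 0 x)
        ((hinner₂ t).intervalIntegrable (μ := volume) 0 x)]
      apply intervalIntegral.integral_congr
      intro u _
      exact (intervalIntegral.integral_sub
        ((show Continuous fun v : ℝ => F (Z₁ u v) from
          hK.continuous.comp (hZ₁c.comp (Continuous.prodMk_right u))).intervalIntegrable (μ := volume) 0 t)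
        ((show Continuous fun v : ℝ => F (Z₂ u v) from
          hK.continuous.comp (hZ₂c.comp (Continuous.prodMk_right u))).intervalIntegrable (μ := volume) 0 t))
    rw [heq₁ x hxa t htb, heq₂ x hxa t htb, hsplit, ← e₁, ← e₂,
      hfagree x hx, hgagree t ht, hc]
    ring
  -- maximum of |Z₁ - Z₂| on the rectangle
  have hRc : IsCompact (Set.Icc (0:ℝ) x₀ ×ˢ Set.Icc (0:ℝ) t₀) :=
    isCompact_Icc.prod isCompact_Icc
  have hRne : (Set.Icc (0:ℝ) x₀ ×ˢ Set.Icc (0:ℝ) t₀).Nonempty :=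
    ⟨(0, 0), ⟨⟨le_refl _, hx₀.le⟩, ⟨le_refl _, ht₀.le⟩⟩⟩
  obtain ⟨p₀, hp₀, hp₀max⟩ := hRc.exists_isMaxOn hRne
    ((hZ₁c.sub hZ₂c).abs.continuousOn)
  set M : ℝ := |Z₁ p₀.1 p₀.2 - Z₂ p₀.1 p₀.2| with hM
  have hM0 : 0 ≤ M := abs_nonneg _
  have hMb : ∀ x ∈ Set.Icc (0:ℝ) x₀, ∀ t ∈ Set.Icc (0:ℝ) t₀,
      |Y₁ x t - Y₂ x t| ≤ M := by
    intro x hx t ht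
    have h2 := hp₀max (Set.mk_mem_prod hx ht)
    simp only at h2
    calc |Y₁ x t - Y₂ x t| = |Z₁ x t - Z₂ x t| := by
          rw [hZ₁eq x (hsubx hx) t (hsubt ht), hZ₂eq x (hsubx hx) t (hsubt ht)]
      _ ≤ M := h2
  -- main induction
  have main : ∀ n : ℕ, ∀ x ∈ Set.Icc (0:ℝ) x₀, ∀ t ∈ Set.Icc (0:ℝ) t₀,
      |Y₁ x t - Y₂ x t| ≤ M * (K * x * t) ^ n / n.factorial := by
    intro n
    induction n with
    | zero => intro x hx t ht; simpa using hMb x hx t ht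
    | succ n IH =>
      intro x hx t ht
      -- pointwise bound on |D| inside the rectangle
      have hDbound : ∀ u ∈ Set.Icc (0:ℝ) x₀, ∀ v ∈ Set.Icc (0:ℝ) t₀,
          |D u v| ≤ K * (M * (K * u * v) ^ n / n.factorial) := by
        intro u hu v hv
        refine (hDb u v).trans ?_
        rw [hZ₁eq u (hsubx hu) v (hsubt hv), hZ₂eq u (hsubx hu) v (hsubt hv)]
        exact mul_le_mul_of_nonneg_left (IH u hu v hv) hK0
      -- bound on inner integral
      have hinner_bound : ∀ u ∈ Set.Icc (0:ℝ) x,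
          |∫ v in (0:ℝ)..t, D u v| ≤
            (K * M * (K * u) ^ n / n.factorial) * (t ^ (n+1) / (n+1)) := by
        intro u hu
        have hu' : u ∈ Set.Icc (0:ℝ) x₀ := Set.Icc_subset_Icc le_rfl hx.2 hu
        calc |∫ v in (0:ℝ)..t, D u v|
            ≤ ∫ v in (0:ℝ)..t, |D u v| :=
              intervalIntegral.abs_integral_le_integral_abs ht.1
          _ ≤ ∫ v in (0:ℝ)..t, (K * M * (K * u) ^ n / n.factorial) * v ^ n := by
              apply intervalIntegral.integral_mono_on ht.1
              · exact ((hDc.comp (Continuous.prodMk_right u)).abs).intervalIntegrable (μ := volume) 0 t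
              · exact (by fun_prop : Continuous fun v : ℝ =>
                  (K * M * (K * u) ^ n / n.factorial) * v ^ n).intervalIntegrable (μ := volume) 0 t
              · intro v hv
                have hv' : v ∈ Set.Icc (0:ℝ) t₀ := Set.Icc_subset_Icc le_rfl ht.2 hv
                refine (hDbound u hu' v hv').trans (le_of_eq ?_)
                ring
          _ = (K * M * (K * u) ^ n / n.factorial) * (t ^ (n+1) / (n+1)) := by
              rw [intervalIntegral.integral_const_mul, integral_pow]
              norm_num
      -- outer integral bound
      have houter : |Y₁ x t - Y₂ x t| ≤
          ∫ u in (0:ℝ)..x, (K * M * (K * u) ^ n / n.factorial) * (t ^ (n+1) / (n+1)) := by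
        rw [key x hx t ht]
        calc |∫ u in (0:ℝ)..x, ∫ v in (0:ℝ)..t, D u v|
            ≤ ∫ u in (0:ℝ)..x, |∫ v in (0:ℝ)..t, D u v| :=
              intervalIntegral.abs_integral_le_integral_abs hx.1
          _ ≤ _ := by
              apply intervalIntegral.integral_mono_on hx.1
              · exact (hinner t).abs.intervalIntegrable (μ := volume) 0 x
              · exact (by fun_prop : Continuous fun u : ℝ =>
                  (K * M * (K * u) ^ n / n.factorial) * (t ^ (n+1) / (n+1))).intervalIntegrable (μ := volume) 0 x
              · exact hinner_bound
      -- compute the outer integral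
      have hcompute : (∫ u in (0:ℝ)..x, (K * M * (K * u) ^ n / n.factorial) * (t ^ (n+1) / (n+1)))
          = (K * M * K ^ n / n.factorial * (t ^ (n+1) / (n+1))) * (x ^ (n+1) / (n+1)) := by
        have : (fun u : ℝ => (K * M * (K * u) ^ n / n.factorial) * (t ^ (n+1) / (n+1)))
            = fun u : ℝ => (K * M * K ^ n / n.factorial * (t ^ (n+1) / (n+1))) * u ^ n := by
          funext u; rw [mul_pow]; ring
        rw [this, intervalIntegral.integral_const_mul, integral_pow]
        norm_num
      refine houter.trans ?_
      rw [hcompute]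
      have heq : (K * M * K ^ n / n.factorial * (t ^ (n+1) / (n+1))) * (x ^ (n+1) / (n+1))
          = (M * (K * x * t) ^ (n+1) / (n+1).factorial) / (n+1) := by
        rw [Nat.factorial_succ, Nat.cast_mul, Nat.cast_add, Nat.cast_one]
        have h1 : ((n:ℝ) + 1) ≠ 0 := by positivity
        have h2 : ((n.factorial : ℝ)) ≠ 0 := by positivity
        field_simp
        ring
      rw [heq]
      apply div_le_self
      · have h3 : (0:ℝ) ≤ K * x * t := mul_nonneg (mul_nonneg hK0 hx.1) ht.1
        exact div_nonneg (mul_nonneg hM0 (pow_nonneg h3 _)) (Nat.cast_nonneg _)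
      · have h4 : (0:ℝ) ≤ (n:ℝ) := Nat.cast_nonneg n
        linarith
  -- conclusion via limit
  intro x hx t ht
  have hten : Tendsto (fun n : ℕ => M * (K * x * t) ^ n / n.factorial) atTop (nhds 0) := by
    have := (FloorSemiring.tendsto_pow_div_factorial_atTop (K * x * t : ℝ)).const_mul M
    simpa [mul_div_assoc] using this
  have hle : |Y₁ x t - Y₂ x t| ≤ 0 :=
    ge_of_tendsto' hten (fun n => main n x hx t ht)
  have := abs_nonneg (Y₁ x t - Y₂ x t)
  have : |Y₁ x t - Y₂ x t| = 0 := le_antisymm hle this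
  linarith [abs_eq_zero.mp this, sub_eq_zero.mp (abs_eq_zero.mp this)]
end
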